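/- The gradient-based contribution function ctrb^g violates the counterfactuality principle (and hence the quantitative counterfactuality principle) with respect to the SD-DFQuAD semantics: there exist an acyclic QBAG G and arguments a, x ∈ A with σ_G(a) = σ_{G↓(A∖{x})}(a) yet ctrb^g_{G,a}(x) ≠ 0. (A witness is the QBAG with A = {a, b, c}, τ(a) = 0.5, τ(b) = 0, τ(c) = 1, and attacks (b,a), (c,b), where σ_G(b) = 0, so σ_G(a) = 0.5 = σ_{G↓(A∖{b})}(a), while ctrb^g_{G,a}(b) = −0.25.) -/

import Mathlib

open Finset

/-- A quantitative bipolar argumentation graph (QBAG): a finite set of arguments,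
an initial strength function, and attack and support relations. -/
structure QBAG where
  args : Finset ℕ
  tau : ℕ → ℝ
  att : Finset (ℕ × ℕ)
  supp : Finset (ℕ × ℕ)

namespace QBAG

/-- The edge relation of the underlying directed graph (attack or support). -/
def edge (G : QBAG) (x y : ℕ) : Prop := (x, y) ∈ G.att ∨ (x, y) ∈ G.supp

/-- Well-formedness: edges live on the arguments, attack and support are disjoint,
and initial strengths lie in [0,1]. -/
def WF (G : QBAG) : Prop :=
  (∀ p ∈ G.att, p.1 ∈ G.args ∧ p.2 ∈ G.args) ∧
  (∀ p ∈ G.supp, p.1 ∈ G.args ∧ p.2 ∈ G.args) ∧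
  Disjoint G.att G.supp ∧
  (∀ a ∈ G.args, G.tau a ∈ Set.Icc (0 : ℝ) 1)

/-- Acyclicity of the directed graph (A, Att ∪ Supp). -/
def Acyclic (G : QBAG) : Prop := ∀ x, ¬ Relation.TransGen G.edge x x

/-- Direct attackers of an argument. -/
def attackers (G : QBAG) (a : ℕ) : Finset ℕ :=
  (G.att.filter (fun p => p.2 = a)).image Prod.fst

/-- Direct supporters of an argument. -/
def supporters (G : QBAG) (a : ℕ) : Finset ℕ :=
  (G.supp.filter (fun p => p.2 = a)).image Prod.fst

/-- Restriction G↓S of a QBAG to a subset S of the arguments. -/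
def restrict (G : QBAG) (S : Finset ℕ) : QBAG where
  args := G.args ∩ S
  tau := G.tau
  att := G.att.filter (fun p => p.1 ∈ S ∧ p.2 ∈ S)
  supp := G.supp.filter (fun p => p.1 ∈ S ∧ p.2 ∈ S)

/-- G⁻: the QBAG G with every attack and support edge pointing into x removed. -/
def dropInto (G : QBAG) (x : ℕ) : QBAG where
  args := G.args
  tau := G.tau
  att := G.att.filter (fun p => p.2 ≠ x)
  supp := G.supp.filter (fun p => p.2 ≠ x)

/-- G[x←ε]: the QBAG G with the initial strength of x replaced by ε. -/
def setTau (G : QBAG) (x : ℕ) (ε : ℝ) : QBAG where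
  args := G.args
  tau := Function.update G.tau x ε
  att := G.att
  supp := G.supp

end QBAG

noncomputable section

/-- Sum aggregation. -/
def sumAgg (G : QBAG) (s : ℕ → ℝ) (a : ℕ) : ℝ :=
  (∑ y ∈ G.supporters a, s y) - (∑ y ∈ G.attackers a, s y)

/-- Product aggregation. -/
def prodAgg (G : QBAG) (s : ℕ → ℝ) (a : ℕ) : ℝ :=
  (∏ y ∈ G.attackers a, (1 - s y)) - (∏ y ∈ G.supporters a, (1 - s y))

/-- Top aggregation. -/
def topAgg (G : QBAG) (s : ℕ → ℝ) (a : ℕ) : ℝ :=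
  (G.supporters a).fold max 0 s - (G.attackers a).fold max 0 s

/-- h for the 2-Max(1) influence function. -/
def h2 (x : ℝ) : ℝ := max 0 x ^ 2 / (1 + max 0 x ^ 2)

/-- h for the 1-Max(1) influence function. -/
def h1 (x : ℝ) : ℝ := max 0 x / (1 + max 0 x)

/-- 2-Max(1) influence function (used by QE). -/
def iotaQE (w s : ℝ) : ℝ := w - w * h2 (-s) + (1 - w) * h2 s

/-- Linear(1) influence function (used by DFQuAD). -/
def iotaLin (w s : ℝ) : ℝ := w - w * max 0 (-s) + (1 - w) * max 0 s

/-- 1-Max(1) influence function (used by SD-DFQuAD). -/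
def iotaSD (w s : ℝ) : ℝ := w - w * h1 (-s) + (1 - w) * h1 s

/-- Euler-based influence function (used by EB and EBT). -/
def iotaEB (w s : ℝ) : ℝ := 1 - (1 - w ^ 2) / (1 + w * Real.exp s)

/-- σ is a modular semantics with aggregation `agg` and influence `iota`:
on every well-formed acyclic QBAG the final strengths satisfy the defining equations. -/
def IsSemantics (agg : QBAG → (ℕ → ℝ) → ℕ → ℝ) (iota : ℝ → ℝ → ℝ)
    (σ : QBAG → ℕ → ℝ) : Prop :=
  ∀ G : QBAG, G.WF → G.Acyclic → ∀ a ∈ G.args, σ G a = iota (G.tau a) (agg G (σ G) a)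

/-- QE semantics. -/
def IsQE (σ : QBAG → ℕ → ℝ) : Prop := IsSemantics sumAgg iotaQE σ

/-- DFQuAD semantics. -/
def IsDF (σ : QBAG → ℕ → ℝ) : Prop := IsSemantics prodAgg iotaLin σ

/-- SD-DFQuAD semantics. -/
def IsSD (σ : QBAG → ℕ → ℝ) : Prop := IsSemantics prodAgg iotaSD σ

/-- EB semantics. -/
def IsEB (σ : QBAG → ℕ → ℝ) : Prop := IsSemantics sumAgg iotaEB σ

/-- EBT semantics. -/
def IsEBT (σ : QBAG → ℕ → ℝ) : Prop := IsSemantics topAgg iotaEB σ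

/-- A gradual semantics assigns final strengths in [0,1] on acyclic QBAGs. -/
def IsGradualSemantics (σ : QBAG → ℕ → ℝ) : Prop :=
  ∀ G : QBAG, G.WF → G.Acyclic → ∀ a ∈ G.args, σ G a ∈ Set.Icc (0 : ℝ) 1

/-- Removal-based contribution: ctrb^r_{G,a}(x) = σ_G(a) − σ_{G↓(A∖{x})}(a). -/
def ctrbR (σ : QBAG → ℕ → ℝ) (G : QBAG) (a x : ℕ) : ℝ :=
  σ G a - σ (G.restrict (G.args.erase x)) a

/-- Intrinsic-removal contribution: ctrb^{ri}_{G,a}(x) = σ_{G⁻}(a) − σ_{G↓(A∖{x})}(a). -/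
def ctrbRI (σ : QBAG → ℕ → ℝ) (G : QBAG) (a x : ℕ) : ℝ :=
  σ (G.dropInto x) a - σ (G.restrict (G.args.erase x)) a

/-- Shapley-based contribution. -/
def ctrbS (σ : QBAG → ℕ → ℝ) (G : QBAG) (a x : ℕ) : ℝ :=
  ∑ X ∈ ((G.args.erase a).erase x).powerset,
    ((X.card.factorial : ℝ) * ((G.args.erase a).card - X.card - 1).factorial /
      (G.args.erase a).card.factorial) *
    (σ (G.restrict (G.args \ X)) a - σ (G.restrict (G.args \ insert x X)) a)

/-- Gradient-based contribution: the derivative at ε = τ(x) (within [0,1]) of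
the map ε ↦ σ_{G[x←ε]}(a). -/
def ctrbG (σ : QBAG → ℕ → ℝ) (G : QBAG) (a x : ℕ) : ℝ :=
  derivWithin (fun ε => σ (G.setTau x ε) a) (Set.Icc (0 : ℝ) 1) (G.tau x)

/-- The contribution existence principle. -/
def ContributionExistence (ctrb : QBAG → ℕ → ℕ → ℝ) (σ : QBAG → ℕ → ℝ) : Prop :=
  ∀ G : QBAG, G.WF → G.Acyclic → ∀ a ∈ G.args,
    σ G a ≠ G.tau a → ∃ x ∈ G.args, x ≠ a ∧ ctrb G a x ≠ 0

/-- The quantitative contribution existence principle. -/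
def QuantContributionExistence (ctrb : QBAG → ℕ → ℕ → ℝ) (σ : QBAG → ℕ → ℝ) : Prop :=
  ∀ G : QBAG, G.WF → G.Acyclic → ∀ a ∈ G.args,
    ∑ x ∈ G.args.erase a, ctrb G a x = σ G a - G.tau a

/-- The strong faithfulness principle. -/
def StrongFaithfulness (ctrb : QBAG → ℕ → ℕ → ℝ) (σ : QBAG → ℕ → ℝ) : Prop :=
  ∀ G : QBAG, G.WF → G.Acyclic → ∀ a ∈ G.args, ∀ x ∈ G.args,
    ∀ ε ∈ Set.Icc (0 : ℝ) 1,
      (ctrb G a x < 0 →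
        (ε < G.tau x → σ G a < σ (G.setTau x ε) a) ∧
        (ε > G.tau x → σ G a > σ (G.setTau x ε) a)) ∧
      (ctrb G a x = 0 → σ G a = σ (G.setTau x ε) a) ∧
      (ctrb G a x > 0 →
        (ε < G.tau x → σ G a > σ (G.setTau x ε) a) ∧
        (ε > G.tau x → σ G a < σ (G.setTau x ε) a))

/-- The local faithfulness principle. -/
def LocalFaithfulness (ctrb : QBAG → ℕ → ℕ → ℝ) (σ : QBAG → ℕ → ℝ) : Prop :=
  ∀ G : QBAG, G.WF → G.Acyclic → ∀ a ∈ G.args, ∀ x ∈ G.args,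
    ∃ δ > 0, ∀ ε ∈ Set.Icc (G.tau x - δ) (G.tau x + δ) ∩ Set.Icc (0 : ℝ) 1,
      (ctrb G a x < 0 →
        (ε < G.tau x → σ G a < σ (G.setTau x ε) a) ∧
        (ε > G.tau x → σ G a > σ (G.setTau x ε) a)) ∧
      (ctrb G a x > 0 →
        (ε < G.tau x → σ G a > σ (G.setTau x ε) a) ∧
        (ε > G.tau x → σ G a < σ (G.setTau x ε) a))

/-- The quantitative local faithfulness principle: the map ε ↦ σ_{G[x←ε]}(a) is
differentiable (within [0,1]) at τ(x) with derivative ctrb_{G,a}(x); equivalently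
σ_{G[x←τ(x)+ε]}(a) = σ_G(a) + ε·ctrb_{G,a}(x) + e(ε) with e(ε)/ε → 0. -/
def QuantLocalFaithfulness (ctrb : QBAG → ℕ → ℕ → ℝ) (σ : QBAG → ℕ → ℝ) : Prop :=
  ∀ G : QBAG, G.WF → G.Acyclic → ∀ a ∈ G.args, ∀ x ∈ G.args,
    HasDerivWithinAt (fun ε => σ (G.setTau x ε) a) (ctrb G a x)
      (Set.Icc (0 : ℝ) 1) (G.tau x)

/-- The counterfactuality principle. -/
def Counterfactuality (ctrb : QBAG → ℕ → ℕ → ℝ) (σ : QBAG → ℕ → ℝ) : Prop :=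
  ∀ G : QBAG, G.WF → G.Acyclic → ∀ a ∈ G.args, ∀ x ∈ G.args,
    (ctrb G a x < 0 → σ G a < σ (G.restrict (G.args.erase x)) a) ∧
    (ctrb G a x = 0 → σ G a = σ (G.restrict (G.args.erase x)) a) ∧
    (ctrb G a x > 0 → σ G a > σ (G.restrict (G.args.erase x)) a)

/-- The quantitative counterfactuality principle. -/
def QuantCounterfactuality (ctrb : QBAG → ℕ → ℕ → ℝ) (σ : QBAG → ℕ → ℝ) : Prop :=
  ∀ G : QBAG, G.WF → G.Acyclic → ∀ a ∈ G.args, ∀ x ∈ G.args,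
    ctrb G a x = σ G a - σ (G.restrict (G.args.erase x)) a

end


section Witness

/-- Witness QBAG: A = {a=0, b=1, c=2}, tau(0)=1/2, tau(1)=0, tau(2)=1,
attacks (1,0) and (2,1). -/
noncomputable def Gw : QBAG where
  args := {0, 1, 2}
  tau := fun n => if n = 0 then 1/2 else if n = 2 then 1 else 0
  att := {(1, 0), (2, 1)}
  supp := ∅

lemma Gw_tau0 : Gw.tau 0 = 1/2 := rfl
lemma Gw_tau1 : Gw.tau 1 = 0 := rfl
lemma Gw_tau2 : Gw.tau 2 = 1 := rfl

lemma Gw_WF : Gw.WF := by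
  refine ⟨?_, ?_, ?_, ?_⟩
  · intro p hp
    fin_cases hp <;> simp [Gw]
  · intro p hp
    simp [Gw] at hp
  · simp [Gw]
  · intro a ha
    fin_cases ha <;> norm_num [Gw, Set.mem_Icc]

lemma Gw_edge_lt : ∀ x y, Gw.edge x y → y < x := by
  intro x y h
  rcases h with h | h <;> simp [Gw, Prod.ext_iff] at h
  omega

lemma Gw_Acyclic : Gw.Acyclic := by
  intro x h
  have h' : Relation.TransGen (fun a b : ℕ => b < a) x x :=
    Relation.TransGen.mono (Gw_edge_lt) x x h
  have ht : Transitive (fun a b : ℕ => b < a) := fun a b c h1 h2 => lt_trans h2 h1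
  rw [show Relation.TransGen (fun a b : ℕ => b < a) = (fun a b : ℕ => b < a) from
    @Relation.transGen_eq_self ℕ _ ⟨fun a b c h1 h2 => ht h1 h2⟩] at h'
  exact lt_irrefl x h'

lemma GwS_WF {ε : ℝ} (hε : ε ∈ Set.Icc (0:ℝ) 1) : (Gw.setTau 1 ε).WF := by
  refine ⟨?_, ?_, ?_, ?_⟩
  · intro p hp
    fin_cases hp <;> simp [Gw, QBAG.setTau]
  · intro p hp
    simp [Gw, QBAG.setTau] at hp
  · simp [Gw, QBAG.setTau]
  · intro a ha
    simp only [QBAG.setTau] at ha ⊢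
    fin_cases ha <;>
      simp [Function.update, Gw] <;> norm_num [Set.mem_Icc]
    · exact hε

lemma GwS_Acyclic {ε : ℝ} : (Gw.setTau 1 ε).Acyclic := by
  intro x h
  exact Gw_Acyclic x h

lemma h1_nonpos {x : ℝ} (hx : x ≤ 0) : h1 x = 0 := by
  unfold h1
  rw [max_eq_left hx]
  simp

lemma h1_one : h1 1 = 1/2 := by norm_num [h1]

lemma att_setTau {ε : ℝ} : (Gw.setTau 1 ε).attackers = Gw.attackers := rfl
lemma supp_setTau {ε : ℝ} : (Gw.setTau 1 ε).supporters = Gw.supporters := rfl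

lemma Gw_att0 : Gw.attackers 0 = {1} := by decide
lemma Gw_att1 : Gw.attackers 1 = {2} := by decide
lemma Gw_att2 : Gw.attackers 2 = ∅ := by decide
lemma Gw_supp : ∀ a, Gw.supporters a = ∅ := by
  intro a
  simp [QBAG.supporters, Gw]

lemma sigma_setTau (σ : QBAG → ℕ → ℝ) (hσ : IsSD σ) {ε : ℝ}
    (hε : ε ∈ Set.Icc (0:ℝ) 1) :
    σ (Gw.setTau 1 ε) 0 = 1/2 - ε/(2*(2+ε)) := by
  set G' := Gw.setTau 1 ε with hG'
  have hWF := GwS_WF hε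
  have hAc : G'.Acyclic := GwS_Acyclic
  have hmem : ∀ n ∈ ({0,1,2} : Finset ℕ), n ∈ G'.args := by
    intro n hn; simpa [G', QBAG.setTau, Gw] using hn
  have htau0 : G'.tau 0 = 1/2 := by simp [G', QBAG.setTau, Function.update, Gw]
  have htau1 : G'.tau 1 = ε := by simp [G', QBAG.setTau, Function.update]
  have htau2 : G'.tau 2 = 1 := by simp [G', QBAG.setTau, Function.update, Gw]
  have h2' : σ G' 2 = 1 := by
    have := hσ G' hWF hAc 2 (hmem 2 (by decide))
    rw [this, htau2]
    unfold prodAgg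
    rw [show G'.attackers 2 = ∅ from Gw_att2,
        show G'.supporters 2 = ∅ from Gw_supp 2]
    norm_num [iotaSD, h1]
  have h1' : σ G' 1 = ε/2 := by
    have := hσ G' hWF hAc 1 (hmem 1 (by decide))
    rw [this, htau1]
    unfold prodAgg
    rw [show G'.attackers 1 = {2} from Gw_att1,
        show G'.supporters 1 = ∅ from Gw_supp 1]
    rw [Finset.prod_singleton, Finset.prod_empty, h2']
    norm_num [iotaSD, h1_one, h1_nonpos]
    ring
  have h0' : σ G' 0 = 1/2 - ε/(2*(2+ε)) := by
    have := hσ G' hWF hAc 0 (hmem 0 (by decide))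
    rw [this, htau0]
    unfold prodAgg
    rw [show G'.attackers 0 = {1} from Gw_att0,
        show G'.supporters 0 = ∅ from Gw_supp 0]
    rw [Finset.prod_singleton, Finset.prod_empty, h1']
    have hε0 : (0:ℝ) ≤ ε := hε.1
    have key : (1 : ℝ) - ε/2 - 1 = -(ε/2) := by ring
    rw [key]
    unfold iotaSD
    rw [neg_neg, h1_nonpos (show -(ε/2) ≤ 0 by linarith)]
    unfold h1
    rw [max_eq_right (by linarith)]
    have hpos : (1:ℝ) + ε/2 > 0 := by linarith
    field_simp
    ring
  exact h0'

lemma setTau_zero : Gw.setTau 1 0 = Gw := by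
  have h : Function.update Gw.tau 1 0 = Gw.tau := by
    rw [show (0:ℝ) = Gw.tau 1 from rfl]
    exact Function.update_eq_self _ _
  show QBAG.mk Gw.args (Function.update Gw.tau 1 0) Gw.att Gw.supp = Gw
  rw [h]

lemma sigma_Gw (σ : QBAG → ℕ → ℝ) (hσ : IsSD σ) : σ Gw 0 = 1/2 := by
  have := sigma_setTau σ hσ (ε := 0) (by norm_num [Set.mem_Icc])
  rw [setTau_zero] at this
  norm_num at this
  exact this

noncomputable def Rw : QBAG := Gw.restrict (Gw.args.erase 1)

lemma Rw_att : Rw.att = ∅ := by decide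
lemma Rw_supp : Rw.supp = ∅ := rfl
lemma Rw_args : Rw.args = {0, 2} := by decide
lemma Rw_tau : Rw.tau = Gw.tau := rfl

lemma Rw_WF : Rw.WF := by
  refine ⟨?_, ?_, ?_, ?_⟩
  · intro p hp; rw [Rw_att] at hp; simp at hp
  · intro p hp; rw [Rw_supp] at hp; simp at hp
  · rw [Rw_att]; simp
  · intro a ha
    rw [Rw_args] at ha
    fin_cases ha <;> norm_num [Rw_tau, Gw, Set.mem_Icc]

lemma Rw_Acyclic : Rw.Acyclic := by
  intro x h
  have : ∀ y z, Rw.edge y z → False := by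
    intro y z hh
    rcases hh with hh | hh
    · rw [Rw_att] at hh; simp at hh
    · rw [Rw_supp] at hh; simp at hh
  have h' : ∀ y z, Relation.TransGen Rw.edge y z → False := by
    intro y z hh
    induction hh with
    | single h => exact this _ _ h
    | tail _ h _ => exact this _ _ h
  exact h' x x h

lemma Rw_no_att : Rw.attackers 0 = ∅ := by
  simp [QBAG.attackers, Rw_att]

lemma Rw_no_supp : Rw.supporters 0 = ∅ := by
  simp [QBAG.supporters, Rw_supp]

lemma sigma_Rw (σ : QBAG → ℕ → ℝ) (hσ : IsSD σ) : σ Rw 0 = 1/2 := by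
  have h0 : (0:ℕ) ∈ Rw.args := by rw [Rw_args]; decide
  have := hσ Rw Rw_WF Rw_Acyclic 0 h0
  rw [this]
  unfold prodAgg
  rw [Rw_no_att, Rw_no_supp]
  have : Rw.tau 0 = 1/2 := rfl
  rw [this]
  norm_num [iotaSD, h1]

lemma ctrbG_Gw (σ : QBAG → ℕ → ℝ) (hσ : IsSD σ) : ctrbG σ Gw 0 1 = -(1/4) := by
  have hd2 : HasDerivAt (fun ε : ℝ => 2*(2+ε)) 2 0 := by
    simpa using ((hasDerivAt_id (0:ℝ)).const_add 2).const_mul 2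
  have hq : HasDerivAt (fun ε : ℝ => ε/(2*(2+ε))) (1/4) 0 := by
    have h : HasDerivAt (fun ε : ℝ => ε/(2*(2+ε)))
        ((1 * (2 * (2 + 0)) - 0 * 2) / (2 * (2 + 0)) ^ 2) 0 :=
      (hasDerivAt_id (0:ℝ)).fun_div hd2 (by norm_num)
    convert h using 1
    norm_num
  have hf : HasDerivAt (fun ε : ℝ => 1/2 - ε/(2*(2+ε))) (-(1/4)) 0 :=
    hq.const_sub (1/2)
  have hEq : Set.EqOn (fun ε => σ (Gw.setTau 1 ε) 0)
      (fun ε : ℝ => 1/2 - ε/(2*(2+ε))) (Set.Icc 0 1) := by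
    intro ε hε
    exact sigma_setTau σ hσ hε
  have h0mem : (0:ℝ) ∈ Set.Icc (0:ℝ) 1 := by norm_num
  have hgoal : HasDerivWithinAt (fun ε => σ (Gw.setTau 1 ε) 0) (-(1/4))
      (Set.Icc (0:ℝ) 1) 0 :=
    (hf.hasDerivWithinAt).congr hEq (hEq h0mem)
  have hu : UniqueDiffWithinAt ℝ (Set.Icc (0:ℝ) 1) 0 :=
    uniqueDiffOn_Icc one_pos 0 h0mem
  have : derivWithin (fun ε => σ (Gw.setTau 1 ε) 0) (Set.Icc (0:ℝ) 1) 0 = -(1/4) :=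
    hgoal.derivWithin hu
  unfold ctrbG
  rw [Gw_tau1]
  exact this

end Witness

/-- The gradient-based contribution function violates counterfactuality
(and hence quantitative counterfactuality) w.r.t. the SD-DFQuAD semantics: there exist
an acyclic QBAG G and a, x ∈ A with σ_G(a) = σ_{G↓(A∖{x})}(a) yet ctrb^g_{G,a}(x) ≠ 0. -/
theorem ctrbG_violates_counterfactuality_SD
    (σ : QBAG → ℕ → ℝ) (hσ : IsSD σ) :
    ¬ Counterfactuality (ctrbG σ) σ ∧
    ¬ QuantCounterfactuality (ctrbG σ) σ ∧
    ∃ G : QBAG, G.WF ∧ G.Acyclic ∧ ∃ a ∈ G.args, ∃ x ∈ G.args,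
      σ G a = σ (G.restrict (G.args.erase x)) a ∧ ctrbG σ G a x ≠ 0 := by
  have hmem0 : (0:ℕ) ∈ Gw.args := by decide
  have hmem1 : (1:ℕ) ∈ Gw.args := by decide
  have hc : ctrbG σ Gw 0 1 = -(1/4) := ctrbG_Gw σ hσ
  have heq : σ Gw 0 = σ (Gw.restrict (Gw.args.erase 1)) 0 := by
    rw [sigma_Gw σ hσ]
    exact (sigma_Rw σ hσ).symm
  refine ⟨?_, ?_, Gw, Gw_WF, Gw_Acyclic, 0, hmem0, 1, hmem1, heq, by rw [hc]; norm_num⟩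
  · intro h
    have := ((h Gw Gw_WF Gw_Acyclic 0 hmem0 1 hmem1).1 (by rw [hc]; norm_num))
    rw [heq] at this
    exact lt_irrefl _ this
  · intro h
    have := h Gw Gw_WF Gw_Acyclic 0 hmem0 1 hmem1
    rw [hc, ← heq, sub_self] at this
    norm_num at this
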